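/- Let S be a numerical semigroup and let x be an odd integer with 1 ≤ x ≤ 2t(S) + 1, where t(S) is the type of S. Then for every odd b ∈ S there exist infinitely many ideals E ⊆ S such that the numerical duplication S⋈ᵇE is almost symmetric and t(S⋈ᵇE) = x. -/

import Mathlib

open Set

/-- A numerical semigroup: an additive submonoid of ℕ (viewed inside ℤ)
with finite complement in ℕ. -/
def IsNumericalSemigroup (S : Set ℤ) : Prop :=
  0 ∈ S ∧ (∀ x ∈ S, ∀ y ∈ S, x + y ∈ S) ∧ (∀ x ∈ S, 0 ≤ x) ∧
    ({z : ℤ | 0 ≤ z} \ S).Finite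

/-- The Frobenius number of a set `X ⊆ ℤ`: the largest integer not in `X`. -/
noncomputable def frobNum (X : Set ℤ) : ℤ := sSup {z : ℤ | z ∉ X}

/-- The genus of a numerical semigroup: the number of gaps. -/
noncomputable def genus (S : Set ℤ) : ℕ := ({z : ℤ | 0 ≤ z} \ S).ncard

/-- `E` is an ideal of `S`: a nonempty subset of `S` closed under adding elements of `S`. -/
def IsIdealOf (S E : Set ℤ) : Prop :=
  E.Nonempty ∧ E ⊆ S ∧ ∀ e ∈ E, ∀ s ∈ S, e + s ∈ E

/-- `E` is a relative ideal of `S`. -/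
def IsRelIdealOf (S E : Set ℤ) : Prop :=
  E.Nonempty ∧ (∀ e ∈ E, ∀ s ∈ S, e + s ∈ E) ∧ ∃ s ∈ S, ∀ e ∈ E, s + e ∈ S

/-- The difference of two subsets of ℤ: `F − G = {z : z + G ⊆ F}`. -/
def setSub (F G : Set ℤ) : Set ℤ := {z : ℤ | ∀ g ∈ G, z + g ∈ F}

/-- The standard canonical ideal `K(S) = {x : f(S) − x ∉ S}`. -/
def stdCanonical (S : Set ℤ) : Set ℤ := {x : ℤ | frobNum S - x ∉ S}

/-- The maximal ideal `M(S) = S ∖ {0}`. -/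
def maxIdeal (S : Set ℤ) : Set ℤ := S \ {0}

/-- The type of a numerical semigroup: `t(S) = |(M−M) ∖ S|`. -/
noncomputable def typeNS (S : Set ℤ) : ℕ :=
  ((setSub (maxIdeal S) (maxIdeal S)) \ S).ncard

/-- The numerical duplication `S ⋈^b E = 2·S ∪ (2·E + b)`. -/
def dup (S E : Set ℤ) (b : ℤ) : Set ℤ :=
  (fun x => 2 * x) '' S ∪ (fun x => 2 * x + b) '' E

/-- The minimum of a (relative) ideal. -/
noncomputable def minE (E : Set ℤ) : ℤ := sInf E

/-- The genus of a relative ideal: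
`g(E) = |{x ∈ ℤ∖E : m(E) ≤ x ≤ f(E)}|`. -/
noncomputable def idealGenus (E : Set ℤ) : ℕ :=
  {x : ℤ | x ∉ E ∧ minE E ≤ x ∧ x ≤ frobNum E}.ncard

/-- The normalization `Ẽ = E + (f(S) − f(E))` of a (relative) ideal `E` of `S`. -/
def tilde (S E : Set ℤ) : Set ℤ := (fun e => e + (frobNum S - frobNum E)) '' E

/-- `S` is symmetric: `z ∈ S ↔ f(S) − z ∉ S`. -/
def IsSymmetric (S : Set ℤ) : Prop := ∀ z : ℤ, z ∈ S ↔ frobNum S - z ∉ S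

/-- `S` is almost symmetric: `K(S) + M(S) ⊆ M(S)`. -/
def IsAlmostSymmetric (S : Set ℤ) : Prop :=
  ∀ k ∈ stdCanonical S, ∀ m ∈ maxIdeal S, k + m ∈ maxIdeal S

lemma frobNum_eq {X : Set ℤ} {a : ℤ} (ha : a ∉ X) (h : ∀ z, a < z → z ∈ X) : frobNum X = a := by
  have hg : IsGreatest {z : ℤ | z ∉ X} a :=
    ⟨ha, fun z hz => not_lt.1 fun h' => hz (h z h')⟩
  exact hg.csSup_eq

lemma exists_upclosed (F : Set ℤ) (hF : F.Finite) :
    ∀ k : ℕ, k ≤ F.ncard → ∃ Z : Set ℤ, Z ⊆ F ∧ Z.ncard = k ∧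
      (∀ z ∈ Z, ∀ y ∈ F, z < y → y ∈ Z) := by
  intro k
  induction k with
  | zero => exact fun _ => ⟨∅, Set.empty_subset _, Set.ncard_empty _, by simp⟩
  | succ n ih =>
    intro hn
    obtain ⟨Z, hZF, hZc, hZup⟩ := ih (by omega)
    have hZfin : Z.Finite := hF.subset hZF
    have hne : (F \ Z).Nonempty := by
      rw [Set.nonempty_iff_ne_empty]
      intro h
      have hFZ : F ⊆ Z := fun a ha => by
        by_contra hc
        exact (Set.eq_empty_iff_forall_notMem.1 h a) ⟨ha, hc⟩
      have : F = Z := Set.Subset.antisymm hFZ hZF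
      rw [this, hZc] at hn
      omega
    obtain ⟨m, hmFZ, hmax⟩ := Set.Finite.exists_maximalFor id (F \ Z) (hF.subset Set.diff_subset) hne
    refine ⟨insert m Z, ?_, ?_, ?_⟩
    · exact Set.insert_subset hmFZ.1 hZF
    · rw [Set.ncard_insert_of_notMem hmFZ.2 hZfin, hZc]
    · rintro z (rfl | hzZ) y hyF hlt
      · right
        by_contra hyZ
        have := hmax (j := y) ⟨hyF, hyZ⟩ (le_of_lt hlt)
        simp at this; omega
      · right; exact hZup z hzZ y hyF hlt

/-- For every odd `x` with `1 ≤ x ≤ 2t(S) + 1` and every odd `b ∈ S` there are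
infinitely many ideals `E ⊆ S` such that the duplication is almost symmetric
of type `x`. -/
theorem infinitely_many_almost_symmetric_duplications
    (S : Set ℤ) (hS : IsNumericalSemigroup S)
    (x : ℕ) (hx : Odd x) (hx1 : 1 ≤ x) (hx2 : x ≤ 2 * typeNS S + 1)
    (b : ℤ) (hb : b ∈ S) (hbodd : Odd b) :
    {E : Set ℤ | IsIdealOf S E ∧ IsAlmostSymmetric (dup S E b) ∧
      typeNS (dup S E b) = x}.Infinite := by
  obtain ⟨h0S, haddS, hposS, hfinS⟩ := hS
  obtain ⟨j, hj⟩ := hbodd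
  have hj' : b = 2 * j + 1 := by omega
  have hb1 : 1 ≤ b := by have := hposS b hb; omega
  have hbj : 0 ≤ j := by omega
  -- Frobenius number of S
  obtain ⟨f, hfnot, hfmax⟩ : ∃ f : ℤ, f ∉ S ∧ ∀ z, z ∉ S → z ≤ f := by
    obtain ⟨N, hN⟩ := hfinS.bddAbove
    have hbdd : ∀ z, z ∉ S → z ≤ max N 0 := by
      intro z hz
      rcases le_or_gt 0 z with h | h
      · exact le_trans (hN ⟨h, hz⟩) (le_max_left _ _)
      · have := le_max_right N 0; omega
    have hm1 : (-1 : ℤ) ∉ S := fun h => by have := hposS _ h; omega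
    obtain ⟨f, hf1, hf2⟩ := Int.exists_greatest_of_bdd ⟨max N 0, fun z hz => hbdd z hz⟩ ⟨-1, hm1⟩
    exact ⟨f, hf1, hf2⟩
  have hfS : ∀ z, f < z → z ∈ S := fun z hz => by
    by_contra h; exact absurd (hfmax z h) (not_le.2 hz)
  have hfrobS : frobNum S = f := frobNum_eq hfnot hfS
  have hf1 : -1 ≤ f := hfmax (-1) (fun h => by have := hposS _ h; omega)
  -- maximal ideal facts
  have hMmem : ∀ m : ℤ, m ∈ maxIdeal S ↔ m ∈ S ∧ m ≠ 0 := fun m => by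
    simp [maxIdeal]
  have hM1 : ∀ m ∈ maxIdeal S, 1 ≤ m := by
    intro m hm
    rw [hMmem] at hm
    have := hposS m hm.1; omega
  -- pseudo-Frobenius set
  obtain ⟨PF, hPFmem, hPFcard⟩ :
      ∃ PF : Set ℤ, (∀ p, p ∈ PF ↔ ((∀ m ∈ maxIdeal S, p + m ∈ maxIdeal S) ∧ p ∉ S)) ∧
        PF.ncard = typeNS S := by
    refine ⟨setSub (maxIdeal S) (maxIdeal S) \ S, fun p => ?_, rfl⟩
    simp [setSub]
  have hPF1 : ∀ p ∈ PF, 1 ≤ p := by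
    intro p hp
    rw [hPFmem] at hp
    obtain ⟨hpM, hpS⟩ := hp
    by_contra h
    push_neg at h
    have hp0 : p ≠ 0 := fun h0 => hpS (h0 ▸ h0S)
    have hpneg : p ≤ -1 := by omega
    rcases le_or_gt 0 f with hf0 | hf0
    · have hm : f - p ∈ maxIdeal S := by
        rw [hMmem]; exact ⟨hfS _ (by omega), by omega⟩
      have h2 := hpM _ hm
      rw [hMmem] at h2
      have h3 : p + (f - p) ∈ S := h2.1
      rw [show p + (f - p) = f by ring] at h3
      exact hfnot h3
    · have hm : -p ∈ maxIdeal S := by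
        rw [hMmem]; exact ⟨hfS _ (by omega), by omega⟩
      have h2 := hpM _ hm
      rw [hMmem] at h2
      exact h2.2 (by ring)
  have hPFf : ∀ p ∈ PF, p ≤ f := by
    intro p hp; exact hfmax p ((hPFmem p).1 hp).2
  have hPFfin : PF.Finite := by
    apply (Set.finite_Icc 1 f).subset
    intro p hp
    exact ⟨hPF1 p hp, hPFf p hp⟩
  have hPFsum : ∀ p ∈ PF, ∀ q ∈ PF, p + q ∉ S → p + q ∈ PF := by
    intro p hp q hq hnot
    rw [hPFmem] at hp hq ⊢
    refine ⟨fun m hm => ?_, hnot⟩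
    have h2 := hp.1 _ (hq.1 m hm)
    rwa [show p + (q + m) = p + q + m by ring] at h2
  -- the number k
  obtain ⟨k, hk⟩ : ∃ k : ℕ, x = 2 * k + 1 := by
    obtain ⟨m, hm⟩ := hx; exact ⟨m, by omega⟩
  have hkt : k ≤ PF.ncard := by rw [hPFcard]; omega
  -- the up-closed set Z of k pseudo-Frobenius numbers
  obtain ⟨Z, hZPF, hZcard, hZup⟩ := exists_upclosed PF hPFfin k hkt
  have hZfin : Z.Finite := hPFfin.subset hZPF
  have hZ1 : ∀ z ∈ Z, 1 ≤ z := fun z hz => hPF1 z (hZPF hz)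
  have hZf : ∀ z ∈ Z, z ≤ f := fun z hz => hPFf z (hZPF hz)
  have hZnS : ∀ z ∈ Z, z ∉ S := fun z hz => ((hPFmem z).1 (hZPF hz)).2
  -- the base ideal A
  obtain ⟨A, hAmem⟩ : ∃ A : Set ℤ, ∀ z : ℤ, z ∈ A ↔ (f - z ∉ S ∧ f - z ∉ Z) :=
    ⟨{z : ℤ | f - z ∉ S ∧ f - z ∉ Z}, fun z => Iff.rfl⟩
  have hA0 : ∀ a ∈ A, 0 ≤ a := by
    intro a ha
    by_contra h
    exact ((hAmem a).1 ha).1 (hfS _ (by omega))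
  have hAf : f ∉ A := fun h => ((hAmem f).1 h).1 (by simpa using h0S)
  have hAtail : ∀ z, f < z → z ∈ A := by
    intro z hz
    rw [hAmem]
    constructor
    · intro h; have := hposS _ h; omega
    · intro h; have := hZ1 _ h; omega
  -- closure of A under S ∪ Z
  have hclos : ∀ w, (w ∈ S ∨ w ∈ Z) → ∀ a ∈ A, w + a ∈ A := by
    intro w hw a ha
    rw [hAmem] at ha ⊢
    constructor
    · intro hcon
      rcases hw with hwS | hwZ
      · refine ha.1 ?_
        have h2 := haddS _ hcon w hwS
        rwa [show f - (w + a) + w = f - a by ring] at h2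
      · rcases eq_or_ne (f - (w + a)) 0 with h0 | h0
        · exact ha.2 (by rw [show f - a = w by omega]; exact hwZ)
        · have hsM : f - (w + a) ∈ maxIdeal S := (hMmem _).2 ⟨hcon, h0⟩
          have h2 := ((hPFmem w).1 (hZPF hwZ)).1 _ hsM
          rw [hMmem] at h2
          refine ha.1 ?_
          have h3 := h2.1
          rwa [show w + (f - (w + a)) = f - a by ring] at h3
    · intro hcon
      have hpPF := hZPF hcon
      rcases hw with hwS | hwZ
      · rcases eq_or_ne w 0 with h0 | h0
        · exact ha.2 (by rw [show f - a = f - (w + a) by omega]; exact hcon)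
        · have hwM : w ∈ maxIdeal S := (hMmem w).2 ⟨hwS, h0⟩
          have h2 := ((hPFmem _).1 hpPF).1 w hwM
          rw [hMmem] at h2
          refine ha.1 ?_
          have h3 := h2.1
          rwa [show f - (w + a) + w = f - a by ring] at h3
      · by_cases hsum : w + (f - (w + a)) ∈ S
        · refine ha.1 ?_
          rwa [show w + (f - (w + a)) = f - a by ring] at hsum
        · have hpf : w + (f - (w + a)) ∈ PF := hPFsum w (hZPF hwZ) _ hpPF hsum
          have hin : w + (f - (w + a)) ∈ Z :=
            hZup w hwZ _ hpf (by have := hPF1 _ hpPF; omega)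
          refine ha.2 ?_
          rwa [show w + (f - (w + a)) = f - a by ring] at hin
  -- the family of ideals
  obtain ⟨Efam, hEmem⟩ : ∃ g : ℤ → Set ℤ, ∀ c z : ℤ, z ∈ g c ↔ z - c ∈ A :=
    ⟨fun c => {z : ℤ | z - c ∈ A}, fun c z => Iff.rfl⟩
  -- main per-c claim
  have hmain : ∀ c : ℤ, f + 1 ≤ c → 1 ≤ c →
      IsIdealOf S (Efam c) ∧ IsAlmostSymmetric (dup S (Efam c) b) ∧
        typeNS (dup S (Efam c) b) = x := by
    intro c hc1 hc2
    have hES : Efam c ⊆ S := by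
      intro z hz
      have := hA0 _ ((hEmem c z).1 hz)
      exact hfS z (by omega)
    have hEc : ∀ z ∈ Efam c, c ≤ z := by
      intro z hz
      have := hA0 _ ((hEmem c z).1 hz)
      omega
    have hIdeal : IsIdealOf S (Efam c) := by
      refine ⟨⟨f + 1 + c, ?_⟩, hES, ?_⟩
      · rw [hEmem]
        rw [show f + 1 + c - c = f + 1 by ring]
        exact hAtail _ (by omega)
      · intro e he s hsS
        rw [hEmem] at he ⊢
        rw [show e + s - c = s + (e - c) by ring]
        exact hclos s (Or.inl hsS) _ he
    -- membership in the duplication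
    have hDeven : ∀ w : ℤ, 2 * w ∈ dup S (Efam c) b ↔ w ∈ S := by
      intro w
      simp only [dup, Set.mem_union, Set.mem_image]
      constructor
      · rintro (⟨s, hsS, hs⟩ | ⟨e, heE, he⟩)
        · rwa [show w = s by omega]
        · omega
      · intro h; exact Or.inl ⟨w, h, rfl⟩
    have hDodd : ∀ w : ℤ, 2 * w + b ∈ dup S (Efam c) b ↔ w ∈ Efam c := by
      intro w
      simp only [dup, Set.mem_union, Set.mem_image]
      constructor
      · rintro (⟨s, hsS, hs⟩ | ⟨e, heE, he⟩)
        · omega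
        · rwa [show w = e by omega]
      · intro h; exact Or.inr ⟨w, h, rfl⟩
    have hfD : frobNum (dup S (Efam c) b) = 2 * (f + c) + b := by
      apply frobNum_eq
      · intro hcon
        have h2 := (hDodd (f + c)).1 (by rwa [show 2 * (f + c) + b = 2 * (f + c) + b by ring])
        rw [hEmem] at h2
        rw [show f + c - c = f by ring] at h2
        exact hAf h2
      · intro z hz
        rcases Int.even_or_odd z with ⟨w, hw⟩ | ⟨w, hw⟩
        · rw [show z = 2 * w by omega]
          exact (hDeven w).2 (hfS w (by omega))
        · rw [show z = 2 * (w - j) + b by omega]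
          refine (hDodd _).2 ?_
          rw [hEmem]
          exact hAtail _ (by omega)
    -- membership in the maximal ideal of the duplication
    have hMDeven : ∀ w : ℤ, 2 * w ∈ maxIdeal (dup S (Efam c) b) ↔ w ∈ maxIdeal S := by
      intro w
      simp only [maxIdeal, Set.mem_diff, Set.mem_singleton_iff, hDeven]
      constructor
      · rintro ⟨h1, h2⟩; exact ⟨h1, by omega⟩
      · rintro ⟨h1, h2⟩; exact ⟨h1, by omega⟩
    have hMDodd : ∀ w : ℤ, 2 * w + b ∈ maxIdeal (dup S (Efam c) b) ↔ w ∈ Efam c := by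
      intro w
      simp only [maxIdeal, Set.mem_diff, Set.mem_singleton_iff, hDodd]
      constructor
      · rintro ⟨h1, h2⟩; exact h1
      · intro h1; exact ⟨h1, by omega⟩
    have hMDcases : ∀ μ ∈ maxIdeal (dup S (Efam c) b),
        (∃ m ∈ maxIdeal S, μ = 2 * m) ∨ (∃ z ∈ Efam c, μ = 2 * z + b) := by
      rintro μ ⟨hμD, hμ0⟩
      simp only [Set.mem_singleton_iff] at hμ0
      rcases hμD with ⟨s, hsS, hs⟩ | ⟨e, heE, he⟩
      · have hs' : 2 * s = μ := hs
        exact Or.inl ⟨s, (hMmem s).2 ⟨hsS, by omega⟩, by omega⟩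
      · have he' : 2 * e + b = μ := he
        exact Or.inr ⟨e, heE, by omega⟩
    -- almost symmetry
    have hAS : IsAlmostSymmetric (dup S (Efam c) b) := by
      intro κ hκ μ hμ
      have hκ' : 2 * (f + c) + b - κ ∉ dup S (Efam c) b := by
        have : frobNum (dup S (Efam c) b) - κ ∉ dup S (Efam c) b := hκ
        rwa [hfD] at this
      rcases Int.even_or_odd κ with ⟨w, hw⟩ | ⟨w0, hw0⟩
      · -- κ = 2 w even
        have hwSZ : w ∈ S ∨ w ∈ Z := by
          have h1 : f + c - w ∉ Efam c := by
            intro hmem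
            exact hκ' (by
              rw [show 2 * (f + c) + b - κ = 2 * (f + c - w) + b by omega]
              exact (hDodd _).2 hmem)
          by_contra hcon
          push_neg at hcon
          refine h1 ?_
          rw [hEmem, hAmem]
          rw [show f - (f + c - w - c) = w by ring]
          exact hcon
        rcases hMDcases μ hμ with ⟨m, hmM, rfl⟩ | ⟨z, hzE, rfl⟩
        · have hin : w + m ∈ maxIdeal S := by
            rcases hwSZ with hwS | hwZ
            · rw [hMmem]
              refine ⟨haddS w hwS m ((hMmem m).1 hmM).1, ?_⟩
              have := hM1 m hmM; have := hposS w hwS; omega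
            · exact ((hPFmem w).1 (hZPF hwZ)).1 m hmM
          have h2 := (hMDeven (w + m)).2 hin
          rwa [show 2 * (w + m) = κ + 2 * m by omega] at h2
        · have hin : w + z ∈ Efam c := by
            rw [hEmem]
            rw [show w + z - c = w + (z - c) by ring]
            exact hclos w hwSZ _ ((hEmem c z).1 hzE)
          have h2 := (hMDodd (w + z)).2 hin
          rwa [show 2 * (w + z) + b = κ + (2 * z + b) by omega] at h2
      · -- κ odd
        have hκw : κ = 2 * (w0 - j) + b := by omega
        set w := w0 - j with hwdef
        have hg : f + c - w ∉ S := by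
          intro hmem
          exact hκ' (by
            rw [show 2 * (f + c) + b - κ = 2 * (f + c - w) by omega]
            exact (hDeven _).2 hmem)
        have hwc : c ≤ w := by
          by_contra h
          push_neg at h
          exact hg (hfS _ (by omega))
        rcases hMDcases μ hμ with ⟨m, hmM, rfl⟩ | ⟨z, hzE, rfl⟩
        · have hin : w + m ∈ Efam c := by
            rw [hEmem, hAmem]
            constructor
            · intro hcon
              refine hg ?_
              have h2 := haddS _ hcon m ((hMmem m).1 hmM).1
              rwa [show f - (w + m - c) + m = f + c - w by ring] at h2
            · intro hcon
              refine hg ?_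
              have h2 := ((hPFmem _).1 (hZPF hcon)).1 m hmM
              rw [hMmem] at h2
              have h3 := h2.1
              rwa [show f - (w + m - c) + m = f + c - w by ring] at h3
          have h2 := (hMDodd (w + m)).2 hin
          rwa [show 2 * (w + m) + b = κ + 2 * m by omega] at h2
        · have hzc := hEc z hzE
          have hin : w + z + b ∈ maxIdeal S := by
            rw [hMmem]
            exact ⟨hfS _ (by omega), by omega⟩
          have h2 := (hMDeven (w + z + b)).2 hin
          rwa [show 2 * (w + z + b) = κ + (2 * z + b) by omega] at h2
    -- the type computation
    have htypeset : setSub (maxIdeal (dup S (Efam c) b)) (maxIdeal (dup S (Efam c) b))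
          \ (dup S (Efam c) b)
        = (fun w => 2 * w) '' Z ∪ (fun v => 2 * (v + c) + b) '' (insert f ((fun z => f - z) '' Z)) := by
      ext y
      simp only [Set.mem_diff, Set.mem_union, Set.mem_image, Set.mem_insert_iff, setSub,
        Set.mem_setOf_eq]
      constructor
      · rintro ⟨hsub, hyD⟩
        rcases Int.even_or_odd y with ⟨w, hw⟩ | ⟨w0, hw0⟩
        · left
          refine ⟨w, ?_, by omega⟩
          have hwS : w ∉ S := fun h => hyD (by
            rw [show y = 2 * w by omega]; exact (hDeven w).2 h)
          have hwE : ∀ z ∈ Efam c, w + z ∈ Efam c := by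
            intro z hz
            have h2 := hsub (2 * z + b) ((hMDodd z).2 hz)
            rw [show y + (2 * z + b) = 2 * (w + z) + b by omega] at h2
            exact (hMDodd _).1 h2
          by_contra hwZ
          have haA : f - w ∈ A := by
            rw [hAmem]
            rw [show f - (f - w) = w by ring]
            exact ⟨hwS, hwZ⟩
          have h3 : w + (f - w + c) ∈ Efam c := by
            refine hwE _ ?_
            rw [hEmem]
            rwa [show f - w + c - c = f - w by ring]
          rw [hEmem] at h3
          rw [show w + (f - w + c) - c = f by ring] at h3
          exact hAf h3
        · right
          have hyw : y = 2 * (w0 - j) + b := by omega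
          set w := w0 - j with hwdef
          refine ⟨w - c, ?_, by omega⟩
          have hwE : w ∉ Efam c := fun h => hyD (by rw [hyw]; exact (hDodd w).2 h)
          have hcond1 : ∀ m ∈ maxIdeal S, w + m ∈ Efam c := by
            intro m hm
            have h2 := hsub (2 * m) ((hMDeven m).2 hm)
            rw [show y + 2 * m = 2 * (w + m) + b by omega] at h2
            exact (hMDodd _).1 h2
          have hnA : w - c ∉ A := fun h => hwE ((hEmem c w).2 h)
          rw [hAmem] at hnA
          push_neg at hnA
          by_cases hsS : f - (w - c) ∈ S
          · left
            rcases eq_or_ne (f - (w - c)) 0 with h0 | h0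
            · omega
            · exfalso
              have hsM : f - (w - c) ∈ maxIdeal S := (hMmem _).2 ⟨hsS, h0⟩
              have h2 := hcond1 _ hsM
              rw [hEmem] at h2
              rw [show w + (f - (w - c)) - c = f by ring] at h2
              exact hAf h2
          · right
            exact ⟨f - (w - c), hnA hsS, by ring⟩
      · rintro (⟨z0, hz0Z, hyeq⟩ | ⟨v, hv, hyeq⟩)
        · -- y = 2 z0, z0 ∈ Z
          constructor
          · intro μ hμ
            rcases hMDcases μ hμ with ⟨m, hmM, rfl⟩ | ⟨z, hzE, rfl⟩
            · have hin := ((hPFmem z0).1 (hZPF hz0Z)).1 m hmM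
              have h2 := (hMDeven (z0 + m)).2 hin
              rwa [show 2 * (z0 + m) = y + 2 * m by omega] at h2
            · have hin : z0 + z ∈ Efam c := by
                rw [hEmem]
                rw [show z0 + z - c = z0 + (z - c) by ring]
                exact hclos z0 (Or.inr hz0Z) _ ((hEmem c z).1 hzE)
              have h2 := (hMDodd (z0 + z)).2 hin
              rwa [show 2 * (z0 + z) + b = y + (2 * z + b) by omega] at h2
          · intro hyD
            rw [show y = 2 * z0 by omega] at hyD
            exact hZnS z0 hz0Z ((hDeven z0).1 hyD)
        · -- y = 2 (v + c) + b with v = f or v = f - z0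
          have hvA : ∀ m ∈ maxIdeal S, v + m ∈ A := by
            intro m hm
            rcases hv with rfl | ⟨z0, hz0Z, rfl⟩
            · exact hAtail _ (by have := hM1 m hm; omega)
            · rw [hAmem]
              constructor
              · intro hcon
                have h2 := haddS _ hcon m ((hMmem m).1 hm).1
                rw [show f - (f - z0 + m) + m = z0 by ring] at h2
                exact hZnS z0 hz0Z h2
              · intro hcon
                have h2 := ((hPFmem _).1 (hZPF hcon)).1 m hm
                rw [hMmem] at h2
                have h3 := h2.1
                rw [show f - (f - z0 + m) + m = z0 by ring] at h3
                exact hZnS z0 hz0Z h3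
          have hv0 : 0 ≤ v ∨ v = f := by
            rcases hv with rfl | ⟨z0, hz0Z, rfl⟩
            · right; rfl
            · left; have := hZf z0 hz0Z; omega
          have hvnA : v ∉ A := by
            rcases hv with rfl | ⟨z0, hz0Z, rfl⟩
            · exact hAf
            · intro h
              rw [hAmem] at h
              exact h.2 (by rwa [show f - (f - z0) = z0 by ring])
          constructor
          · intro μ hμ
            rcases hMDcases μ hμ with ⟨m, hmM, rfl⟩ | ⟨z, hzE, rfl⟩
            · have hin : (v + c) + m ∈ Efam c := by
                rw [hEmem]
                rw [show v + c + m - c = v + m by ring]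
                exact hvA m hmM
              have h2 := (hMDodd ((v + c) + m)).2 hin
              rwa [show 2 * ((v + c) + m) + b = y + 2 * m by omega] at h2
            · have hzc := hEc z hzE
              have hin : (v + c) + z + b ∈ maxIdeal S := by
                rw [hMmem]
                rcases hv0 with h | h
                · exact ⟨hfS _ (by omega), by omega⟩
                · exact ⟨hfS _ (by omega), by omega⟩
              have h2 := (hMDeven ((v + c) + z + b)).2 hin
              rwa [show 2 * ((v + c) + z + b) = y + (2 * z + b) by omega] at h2
          · intro hyD
            rw [show y = 2 * (v + c) + b by omega] at hyD
            have h2 := (hDodd (v + c)).1 hyD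
            rw [hEmem] at h2
            rw [show v + c - c = v by ring] at h2
            exact hvnA h2
    have hcount : typeNS (dup S (Efam c) b) = x := by
      show (setSub (maxIdeal (dup S (Efam c) b)) (maxIdeal (dup S (Efam c) b))
          \ (dup S (Efam c) b)).ncard = x
      rw [htypeset]
      have hinj1 : Function.Injective (fun w : ℤ => 2 * w) := by
        intro a b h
        have h' : 2 * a = 2 * b := h
        omega
      have hinj2 : Function.Injective (fun v : ℤ => 2 * (v + c) + b) := by
        intro a1 a2 h
        have h' : 2 * (a1 + c) + b = 2 * (a2 + c) + b := h
        omega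
      have hinj3 : Function.Injective (fun z : ℤ => f - z) := by
        intro a b h
        have h' : f - a = f - b := h
        omega
      have hWfin : (insert f ((fun z => f - z) '' Z)).Finite := (hZfin.image _).insert f
      have hdisj : Disjoint ((fun w => 2 * w) '' Z)
          ((fun v => 2 * (v + c) + b) '' (insert f ((fun z => f - z) '' Z))) := by
        rw [Set.disjoint_left]
        rintro a ⟨w, _, rfl⟩ ⟨v, _, hv⟩
        simp only at hv
        omega
      rw [Set.ncard_union_eq hdisj (hZfin.image _) (hWfin.image _)]
      rw [Set.ncard_image_of_injective _ hinj1, Set.ncard_image_of_injective _ hinj2]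
      have hfnotim : f ∉ (fun z => f - z) '' Z := by
        rintro ⟨z0, hz0, hz0e⟩
        simp only at hz0e
        have := hZ1 z0 hz0
        omega
      rw [Set.ncard_insert_of_notMem hfnotim (hZfin.image _)]
      rw [Set.ncard_image_of_injective _ hinj3, hZcard]
      omega
    exact ⟨hIdeal, hAS, hcount⟩
  -- assemble: infinitely many ideals
  have hinjE : ∀ c1 c2 : ℤ, Efam c1 = Efam c2 → c1 = c2 := by
    have key : ∀ c1 c2 : ℤ, c1 < c2 → Efam c1 ≠ Efam c2 := by
      intro c1 c2 hlt h
      have h1 : f + c2 ∈ Efam c1 := by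
        rw [hEmem]
        exact hAtail _ (by omega)
      rw [h, hEmem] at h1
      rw [show f + c2 - c2 = f by ring] at h1
      exact hAf h1
    intro c1 c2 h
    rcases lt_trichotomy c1 c2 with hlt | he | hlt
    · exact absurd h (key c1 c2 hlt)
    · exact he
    · exact absurd h.symm (key c2 c1 hlt)
  have hsub : Efam '' {c : ℤ | max (f + 1) 1 ≤ c} ⊆
      {E : Set ℤ | IsIdealOf S E ∧ IsAlmostSymmetric (dup S E b) ∧ typeNS (dup S E b) = x} := by
    rintro _ ⟨c, hc, rfl⟩
    simp only [Set.mem_setOf_eq] at hc ⊢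
    exact hmain c (le_trans (le_max_left _ _) hc) (le_trans (le_max_right _ _) hc)
  refine Set.Infinite.mono hsub (Set.Infinite.image ?_ ?_)
  · intro c1 _ c2 _ h
    exact hinjE c1 c2 h
  · exact Set.Ici_infinite _
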